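/- Let F_q be a finite field of odd characteristic, let D ∈ F_q be a nonzero element that is not a square in F_q, and let α ∈ F_q with α ≠ 0. Define polynomials a(x) = 2αx − α² − D, b(x) = 2αx² + (−3α² − D)x + α³ + Dα, c(x) = (−α² − D)x² + (α³ + Dα)x − α⁴/4 − Dα²/2 + 3D²/4, and Δ(x) = b(x)² − 4a(x)c(x) in F_q[x]. Then there is no polynomial f(x) with coefficients in the algebraic closure of F_q such that Δ(x) = f(x)² (i.e., the image of Δ in (algebraic closure of F_q)[x] is not the square of a polynomial). -/

import Mathlib

open Polynomial

/-- Finite field of odd characteristic, `D` a nonzero non-square, `α ≠ 0`. The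
discriminant polynomial `Δ(x) = b(x)² − 4a(x)c(x)`, with
`a(x) = 2αx − α² − D`, `b(x) = 2αx² + (−3α² − D)x + α³ + Dα`,
`c(x) = (−α² − D)x² + (α³ + Dα)x − α⁴/4 − Dα²/2 + 3D²/4`,
is not the square of any polynomial over the algebraic closure of `F`. -/
theorem discriminant_odd_not_square (F : Type*) [Field F] [Fintype F]
    (hchar : ringChar F ≠ 2) (D : F) (hD0 : D ≠ 0) (hDns : ¬ ∃ w : F, D = w ^ 2)
    (α : F) (hα : α ≠ 0) :
    ¬ ∃ f : Polynomial (AlgebraicClosure F),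
      Polynomial.map (algebraMap F (AlgebraicClosure F))
        ((C (2 * α) * X ^ 2 + C (-3 * α ^ 2 - D) * X + C (α ^ 3 + D * α)) ^ 2 -
          C 4 * (C (2 * α) * X + C (-α ^ 2 - D)) *
            (C (-α ^ 2 - D) * X ^ 2 + C (α ^ 3 + D * α) * X +
              C (-(α ^ 4) / 4 - D * α ^ 2 / 2 + 3 * D ^ 2 / 4))) = f ^ 2 := by
  rintro ⟨f, hf⟩
  set K := AlgebraicClosure F with hK
  set i : F →+* K := algebraMap F K with hi
  have hinj : Function.Injective i := i.injective
  have hi2 : i 2 = 2 := map_ofNat i 2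
  have hi3 : i 3 = 3 := map_ofNat i 3
  have h2F : (2 : F) ≠ 0 := Ring.two_ne_zero hchar
  have h2K : (2 : K) ≠ 0 := by
    intro h
    exact h2F (hinj (by rw [hi2, map_zero]; exact h))
  have h4K : (4 : K) ≠ 0 := by
    intro h
    apply h2K
    have : (2 : K) * 2 = 0 := by rw [← h]; norm_num
    rcases mul_eq_zero.mp this with h' | h' <;> exact h'
  obtain ⟨s, hs⟩ := IsAlgClosed.exists_pow_nat_eq (i D) (n := 2) (by norm_num)
  set a : K := i α with ha
  have hs0 : s ≠ 0 := by
    intro h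
    apply hD0
    apply hinj
    rw [← hs, h]
    simp
  have has : a ≠ s := by
    intro h
    apply hDns
    exact ⟨α, hinj (by rw [map_pow, ← ha, h, hs])⟩
  have hans : a ≠ -s := by
    intro h
    apply hDns
    refine ⟨α, hinj ?_⟩
    rw [map_pow, ← ha, h, ← hs]
    ring
  have ha3s : a ≠ 3 * s := by
    intro h
    by_cases h3 : (3 : F) = 0
    · apply hα
      apply hinj
      rw [← ha, h]
      have h3K0 : (3 : K) = 0 := by
        have := congrArg i h3
        rwa [hi3, map_zero] at this
      rw [h3K0]
      simp
    · apply hDns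
      refine ⟨α / 3, hinj ?_⟩
      have h3K : (3 : K) ≠ 0 := by
        intro hh
        exact h3 (hinj (by rw [hi3, map_zero]; exact hh))
      rw [map_pow, map_div₀, ← ha, ← hs]
      rw [hi3, h]
      rw [mul_div_cancel_left₀ _ h3K]
  -- key factorization over K
  have key : Polynomial.map i
        ((C (2 * α) * X ^ 2 + C (-3 * α ^ 2 - D) * X + C (α ^ 3 + D * α)) ^ 2 -
          C 4 * (C (2 * α) * X + C (-α ^ 2 - D)) *
            (C (-α ^ 2 - D) * X ^ 2 + C (α ^ 3 + D * α) * X +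
              C (-(α ^ 4) / 4 - D * α ^ 2 / 2 + 3 * D ^ 2 / 4))) =
      (C (2 * a) * X - C (a ^ 2 + s ^ 2)) * (C (2 * a) * X - C (a ^ 2 - 3 * s ^ 2)) *
        ((X - C s) * (X + C s)) := by
    apply Polynomial.funext
    intro x
    simp only [Polynomial.map_sub, Polynomial.map_add, Polynomial.map_mul, Polynomial.map_pow,
      Polynomial.map_C, Polynomial.map_X, eval_sub, eval_add, eval_mul, eval_pow, eval_C, eval_X]
    simp only [map_mul, map_add, map_sub, map_neg, map_pow, map_div₀, map_ofNat, ← ha]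
    rw [← hs]
    have e : (-a ^ 4 / 4 - s ^ 2 * a ^ 2 / 2 + 3 * (s ^ 2) ^ 2 / 4) * 4 = -a ^ 4 - 2 * s ^ 2 * a ^ 2 + 3 * (s ^ 2) ^ 2 := by
      have h4 : (4 : K)⁻¹ * 4 = 1 := inv_mul_cancel₀ h4K
      have h2 : (2 : K)⁻¹ * 2 = 1 := inv_mul_cancel₀ h2K
      linear_combination (-a ^ 4 + 3 * (s ^ 2) ^ 2) * h4 - 2 * s ^ 2 * a ^ 2 * h2
    linear_combination (-(2 * a * x + (-a ^ 2 - s ^ 2))) * e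
  rw [key] at hf
  -- f has s as a root
  have hfs : f.eval s = 0 := by
    have h := congrArg (eval s) hf
    simp only [eval_mul, eval_sub, eval_add, eval_pow, eval_C, eval_X, sub_self, mul_zero,
      zero_mul] at h
    exact pow_eq_zero_iff (n := 2) (by norm_num) |>.mp h.symm
  obtain ⟨f1, rfl⟩ := (dvd_iff_isRoot (p := f)).mpr hfs
  have hXs : (X - C s : K[X]) ≠ 0 := X_sub_C_ne_zero s
  have hcancel : (C (2 * a) * X - C (a ^ 2 + s ^ 2)) * (C (2 * a) * X - C (a ^ 2 - 3 * s ^ 2)) *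
      (X + C s) = (X - C s) * f1 ^ 2 := by
    apply mul_left_cancel₀ hXs
    linear_combination hf
  have h := congrArg (eval s) hcancel
  simp only [eval_mul, eval_sub, eval_add, eval_pow, eval_C, eval_X, sub_self, zero_mul] at h
  rcases mul_eq_zero.mp h with h' | h'
  · rcases mul_eq_zero.mp h' with h'' | h''
    · have : -(a - s) ^ 2 = 0 := by linear_combination h''
      have : a - s = 0 := by
        have := pow_eq_zero_iff (n := 2) (by norm_num) |>.mp (neg_eq_zero.mp this)
        exact this
      exact has (sub_eq_zero.mp this)
    · have : -((a - 3 * s) * (a + s)) = 0 := by linear_combination h''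
      rcases mul_eq_zero.mp (neg_eq_zero.mp this) with h3 | h3
      · exact ha3s (by linear_combination h3)
      · exact hans (by linear_combination h3)
  · exact h2K (by
      have : (2 : K) * s = 0 := by linear_combination h'
      rcases mul_eq_zero.mp this with h'' | h''
      · exact h''
      · exact absurd h'' hs0)
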